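/- Let f be a Fréchet differentiable pseudolinear function on an open convex set S in a real Banach space E. Then for all x, y in S: ⟨∇f(x), y − x⟩ = 0 if and only if f(y) = f(x). -/

import Mathlib

def Pseudoconvex {E : Type*} [NormedAddCommGroup E] [NormedSpace ℝ E]
    (S : Set E) (f : E → ℝ) (f' : E → E →L[ℝ] ℝ) : Prop :=
  ∀ x ∈ S, ∀ y ∈ S, f y < f x → f' x (y - x) < 0

def Pseudolinear {E : Type*} [NormedAddCommGroup E] [NormedSpace ℝ E]
    (S : Set E) (f : E → ℝ) (f' : E → E →L[ℝ] ℝ) : Prop :=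
  Pseudoconvex S f f' ∧ Pseudoconvex S (fun x => -f x) (fun x => -(f' x))

lemma eventually_gt_of_pos_deriv {g : ℝ → ℝ} {c : ℝ} (hg : HasDerivAt g c 0) (hc : 0 < c) :
    ∀ᶠ t in nhdsWithin (0:ℝ) (Set.Ioi 0), g 0 < g t := by
  have hslope := hasDerivAt_iff_tendsto_slope.mp hg
  have h1 : ∀ᶠ t in nhdsWithin (0:ℝ) {(0:ℝ)}ᶜ, 0 < slope g 0 t :=
    hslope.eventually (eventually_gt_nhds hc)
  have hle : nhdsWithin (0:ℝ) (Set.Ioi 0) ≤ nhdsWithin (0:ℝ) {(0:ℝ)}ᶜ := by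
    apply nhdsWithin_mono
    intro t ht
    exact ne_of_gt ht
  filter_upwards [hle h1, self_mem_nhdsWithin] with t ht ht0
  have : 0 < (g t - g 0) / (t - 0) := by rw [← slope_def_field]; exact ht
  have htpos : (0:ℝ) < t := ht0
  rw [sub_zero] at this
  rcases div_pos_iff.mp this with ⟨h, _⟩ | ⟨_, h⟩ <;> linarith

lemma aux_key {E : Type*} [NormedAddCommGroup E] [NormedSpace ℝ E]
    {S : Set E} (hSc : Convex ℝ S)
    (f : E → ℝ) (f' : E → E →L[ℝ] ℝ)
    (hdiff : ∀ x ∈ S, HasFDerivAt f (f' x) x)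
    (hpc : Pseudoconvex S f f')
    {x y : E} (hx : x ∈ S) (hy : y ∈ S) (hfe : f y = f x) :
    ¬ 0 < f' x (y - x) := by
  intro hpos
  set v := y - x with hv
  have hline : HasDerivAt (fun t : ℝ => x + t • v) v 0 := by
    simpa using ((hasDerivAt_id (0:ℝ)).smul_const v).const_add x
  have hg : HasDerivAt (fun t : ℝ => f (x + t • v)) (f' x v) 0 := by
    have h0 : HasFDerivAt f (f' x) ((fun t : ℝ => x + t • v) 0) := by
      simpa using hdiff x hx
    exact h0.comp_hasDerivAt (0:ℝ) hline
  have hev := eventually_gt_of_pos_deriv hg hpos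
  have hIoo : Set.Ioo (0:ℝ) 1 ∈ nhdsWithin (0:ℝ) (Set.Ioi 0) :=
    Ioo_mem_nhdsGT_of_mem (by constructor <;> norm_num)
  rcases (hev.and (Filter.eventually_of_mem hIoo (fun t ht => ht))).exists with
    ⟨t, hgt, ht0, ht1⟩
  set z := x + t • v with hz
  have hzS : z ∈ S := by
    have := hSc hx hy (by linarith : (0:ℝ) ≤ 1 - t) (le_of_lt ht0) (by ring)
    have hzeq : (1 - t) • x + t • y = z := by
      simp only [hz, hv]; module
    rwa [hzeq] at this
  have hfz : f x < f z := by simpa [hz] using hgt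
  have h1 : f' z (y - z) < 0 := hpc z hzS y hy (by rw [hfe]; exact hfz)
  have h2 : f' z (x - z) < 0 := hpc z hzS x hx hfz
  have e1 : y - z = (1 - t) • v := by simp only [hz, hv]; module
  have e2 : x - z = (-t) • v := by simp only [hz, hv]; module
  rw [e1, map_smul] at h1
  rw [e2, map_smul] at h2
  simp only [smul_eq_mul] at h1 h2
  nlinarith

theorem stmt_2 {E : Type*} [NormedAddCommGroup E] [NormedSpace ℝ E] [CompleteSpace E]
    {S : Set E} (hSo : IsOpen S) (hSc : Convex ℝ S)
    (f : E → ℝ) (f' : E → E →L[ℝ] ℝ)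
    (hdiff : ∀ x ∈ S, HasFDerivAt f (f' x) x)
    (hpl : Pseudolinear S f f') :
    ∀ x ∈ S, ∀ y ∈ S, (f' x (y - x) = 0 ↔ f y = f x) := by
  intro x hx y hy
  constructor
  · intro h0
    by_contra hne
    rcases lt_or_gt_of_ne hne with hlt | hgt
    · have := hpl.1 x hx y hy hlt
      rw [h0] at this; exact lt_irrefl 0 this
    · have := hpl.2 x hx y hy (by simpa using hgt)
      simp only [ContinuousLinearMap.neg_apply, h0] at this
      exact lt_irrefl 0 (by simpa using this)
  · intro hfe
    by_contra hne
    rcases lt_or_gt_of_ne hne with hlt | hgt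
    · have hneg : ¬ 0 < (fun x => -(f' x)) x (y - x) := by
        refine aux_key hSc (fun z => -f z) (fun z => -(f' z))
          (fun z hz => (hdiff z hz).neg) hpl.2 hx hy (by simp [hfe])
      exact hneg (by simpa using hlt)
    · exact aux_key hSc f f' hdiff hpl.1 hx hy hfe hgt
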